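/- Every bijection f : ℝ^d → ℝ^d (d ≥ 1) that preserves the quadratic Minkowski form of differences, i.e., satisfies Q(f(p) - f(q)) = Q(p - q) for all p, q where Q(x) = x₁² - (x₂² + ... + x_d²), is an affine map (a linear transformation composed with a translation). -/

import Mathlib

/-- Every bijection of ℝ^d (d ≥ 1) preserving the Minkowski quadratic
form of differences is affine: a linear map composed with a translation. -/
theorem stmt_4 (d : ℕ) (hd : 1 ≤ d) (f : (Fin d → ℝ) → (Fin d → ℝ))
    (hbij : Function.Bijective f)
    (Q : (Fin d → ℝ) → ℝ)
    (hQ : ∀ x, Q x = (x ⟨0, hd⟩) ^ 2 - ∑ i ∈ Finset.univ \ {⟨0, hd⟩}, (x i) ^ 2)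
    (hpres : ∀ p q, Q (f p - f q) = Q (p - q)) :
    ∃ (L : (Fin d → ℝ) →ₗ[ℝ] (Fin d → ℝ)) (t : Fin d → ℝ), ∀ x, f x = L x + t := by
  set i0 : Fin d := ⟨0, hd⟩ with hi0
  set B : (Fin d → ℝ) → (Fin d → ℝ) → ℝ :=
    fun x y => x i0 * y i0 - ∑ i ∈ Finset.univ \ {i0}, x i * y i with hBdef
  have hBQ : ∀ x, Q x = B x x := by
    intro x
    rw [hQ]
    simp only [hBdef, sq]
  have hcomm : ∀ (u v : Fin d → ℝ),
      ∑ i ∈ Finset.univ \ {i0}, v i * u i = ∑ i ∈ Finset.univ \ {i0}, u i * v i :=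
    fun u v => Finset.sum_congr rfl (fun i _ => mul_comm _ _)
  have hpol : ∀ u v, B (u - v) (u - v) = B u u - 2 * B u v + B v v := by
    intro u v
    simp only [hBdef, Pi.sub_apply, sub_mul, mul_sub, Finset.sum_sub_distrib]
    rw [hcomm v u]
    ring
  have hBaddl : ∀ x y z, B (x + y) z = B x z + B y z := by
    intro x y z
    simp only [hBdef, Pi.add_apply, add_mul, Finset.sum_add_distrib]
    ring
  have hBsubl : ∀ x y z, B (x - y) z = B x z - B y z := by
    intro x y z
    simp only [hBdef, Pi.sub_apply, sub_mul, Finset.sum_sub_distrib]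
    ring
  have hBsmull : ∀ (a : ℝ) x z, B (a • x) z = a * B x z := by
    intro a x z
    simp only [hBdef, Pi.smul_apply, smul_eq_mul, mul_sub, Finset.mul_sum, mul_assoc]
  -- nondegeneracy
  have hnd : ∀ w : Fin d → ℝ, (∀ y, B w y = 0) → w = 0 := by
    intro w h
    funext j
    show w j = 0
    by_cases hj : j = i0
    · have hz : ∑ i ∈ Finset.univ \ {i0}, w i * (Pi.single i0 1 : Fin d → ℝ) i = 0 := by
        apply Finset.sum_eq_zero
        intro i hi
        rw [Finset.mem_sdiff, Finset.mem_singleton] at hi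
        rw [Pi.single_eq_of_ne hi.2, mul_zero]
      have h1 := h (Pi.single i0 1)
      simp only [hBdef] at h1
      rw [hz, sub_zero, Pi.single_eq_same, mul_one] at h1
      rw [hj]; exact h1
    · have hz : ∑ i ∈ Finset.univ \ {i0}, w i * (Pi.single j 1 : Fin d → ℝ) i = w j := by
        rw [Finset.sum_eq_single j]
        · rw [Pi.single_eq_same, mul_one]
        · intro i _ hij
          rw [Pi.single_eq_of_ne hij, mul_zero]
        · intro hjn
          exact absurd (by simp [hj]) hjn
      have h1 := h (Pi.single j 1)
      simp only [hBdef] at h1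
      rw [hz, Pi.single_eq_of_ne (Ne.symm hj), mul_zero, zero_sub, neg_eq_zero] at h1
      exact h1
  -- translated map
  set g : (Fin d → ℝ) → (Fin d → ℝ) := fun x => f x - f 0 with hgdef
  have hgsurj : Function.Surjective g := by
    intro y
    obtain ⟨x, hx⟩ := hbij.2 (y + f 0)
    exact ⟨x, by simp [hgdef, hx]⟩
  have hgQ : ∀ p q, B (g p - g q) (g p - g q) = B (p - q) (p - q) := by
    intro p q
    have : g p - g q = f p - f q := by simp [hgdef]
    rw [this, ← hBQ, ← hBQ, hpres]
  have hg00 : g 0 = 0 := by simp [hgdef]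
  have hg0 : ∀ p, B (g p) (g p) = B p p := by
    intro p
    have h1 := hgQ p 0
    rw [hg00, sub_zero, sub_zero] at h1
    exact h1
  have hgB : ∀ p q, B (g p) (g q) = B p q := by
    intro p q
    have h1 := hgQ p q
    rw [hpol (g p) (g q), hpol p q, hg0 p, hg0 q] at h1
    linarith
  have hgadd : ∀ p q, g (p + q) = g p + g q := by
    intro p q
    have : g (p + q) - (g p + g q) = 0 := by
      apply hnd
      intro y
      obtain ⟨r, hr⟩ := hgsurj y
      rw [← hr, hBsubl, hBaddl, hgB, hgB, hgB, ← hBaddl]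
      exact sub_self _
    have := sub_eq_zero.mp this
    exact this
  have hgsmul : ∀ (a : ℝ) p, g (a • p) = a • g p := by
    intro a p
    have : g (a • p) - a • g p = 0 := by
      apply hnd
      intro y
      obtain ⟨r, hr⟩ := hgsurj y
      rw [← hr, hBsubl, hBsmull, hgB, hgB, ← hBsmull]
      ring
    exact sub_eq_zero.mp this
  refine ⟨⟨⟨g, hgadd⟩, hgsmul⟩, f 0, ?_⟩
  intro x
  simp [hgdef]
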